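/- Let G be a program graph with locations L, let O ⊆ L, and let k ∈ ℕ. If G is (k,O)-observable, then the set SymTraces^k_O(G) of observed symbolic traces with k observations is finite (assuming a fixed deterministic choice of fresh variables in symbolic execution). -/

import Mathlib

open scoped Classical

namespace HyperSE

variable {Val X L V : Type}

/-- Guarded-assignment instructions: deterministic assignment of (the shallow semantics of)
a term to a variable, or a nondeterministic assignment (`havoc`). -/
inductive Instr (Val X : Type) where
  | assign (x : X) (e : (X → Val) → Val)
  | havoc (x : X)

/-- Concrete execution of an instruction on memories. -/
def Instr.exec : Instr Val X → (X → Val) → (X → Val) → Prop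
  | .assign x e, m, m' => m' = Function.update m x (e m)
  | .havoc x, m, m' => ∃ v : Val, m' = Function.update m x v

/-- A program graph: edges between locations, an initial location, and an
instruction (`effect`) and a guard for every edge. -/
structure ProgramGraph (Val X L : Type) where
  edges : L → L → Prop
  init : L
  effect : L → L → Instr Val X
  guard : L → L → (X → Val) → Prop

/-- Execution states: a location together with a memory. -/
abbrev State (Val X L : Type) := L × (X → Val)

/-- The transition relation of a program graph. -/
def ProgramGraph.Step (G : ProgramGraph Val X L) (s₁ s₂ : State Val X L) : Prop :=
  G.edges s₁.1 s₂.1 ∧ G.guard s₁.1 s₂.1 s₁.2 ∧ (G.effect s₁.1 s₂.1).exec s₁.2 s₂.2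

/-- Finite traces: nonempty finite sequences of states starting in the initial state
(initial location together with the fixed initial memory `m₀`) and following `Step`. -/
def FinTraces (m₀ : X → Val) (G : ProgramGraph Val X L) : Set (List (State Val X L)) :=
  { τ | τ.head? = some (G.init, m₀) ∧ τ.Chain' G.Step }

/-- Projection `[σ]_O` of a finite trace onto the observed locations `O`. -/
noncomputable def obs (O : Set L) (σ : List (State Val X L)) : List (State Val X L) :=
  σ.filter fun s => decide (s.1 ∈ O)

/-- `|σ|_O`: the number of observed states of `σ`. -/
noncomputable def obsLen (O : Set L) (σ : List (State Val X L)) : ℕ :=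
  (obs O σ).length

/-- `Traces*_O(G)`: observational projections of the finite traces of `G`. -/
def TracesO (m₀ : X → Val) (G : ProgramGraph Val X L) (O : Set L) :
    Set (List (State Val X L)) :=
  { t | ∃ τ ∈ FinTraces m₀ G, t = obs O τ }

/-- `Traces^k_O(G)`: observational projections of length `k`. -/
def TracesKO (m₀ : X → Val) (G : ProgramGraph Val X L) (O : Set L) (k : ℕ) :
    Set (List (State Val X L)) :=
  { t | t ∈ TracesO m₀ G O ∧ t.length = k }

/-- Infinite traces of a program graph. -/
def InfTraces (m₀ : X → Val) (G : ProgramGraph Val X L) : Set (ℕ → State Val X L) :=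
  { σ | σ 0 = (G.init, m₀) ∧ ∀ i, G.Step (σ i) (σ (i + 1)) }

/-- `t` is the subsequence of `σ` consisting of exactly the states whose location is in `O`
(in particular `σ` has infinitely many observations). -/
def IsObsSubseq (O : Set L) (σ t : ℕ → State Val X L) : Prop :=
  ∃ f : ℕ → ℕ, StrictMono f ∧ (∀ n, t n = σ (f n)) ∧ (∀ n, (σ (f n)).1 ∈ O) ∧
    ∀ i, (σ i).1 ∈ O → ∃ n, f n = i

/-- `Traces^ω_O(G)`: observational projections of the infinite traces of `G` that have
infinitely many observations. -/
def TracesOmegaO (m₀ : X → Val) (G : ProgramGraph Val X L) (O : Set L) :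
    Set (ℕ → State Val X L) :=
  { t | ∃ σ ∈ InfTraces m₀ G, IsObsSubseq O σ t }

/-- OHyperLTL_safe formulas: a prefix of trace quantifiers (each annotated with a program
graph and a set of observed locations), followed by an invariant `□φ`, where the
quantifier-free formula `φ` is represented shallowly by a predicate on valuations of the
indexed variables `x_π`. -/
inductive HForm (Val X L V : Type) where
  | all (G : ProgramGraph Val X L) (O : Set L) (π : V) (ψ : HForm Val X L V)
  | ex (G : ProgramGraph Val X L) (O : Set L) (π : V) (ψ : HForm Val X L V)
  | always (φ : (V → X → Val) → Prop)

/-- The valuation `Pi_i` (with default value `m₀ x` for unbound trace variables). -/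
def memAt (m₀ : X → Val) (Pi : V → List (State Val X L)) (i : ℕ) : V → X → Val :=
  fun π x =>
    match (Pi π)[i]? with
    | some s => s.2 x
    | none => m₀ x

/-- Bounded semantics `Pi ⊨^k ψ`: quantifiers range over observed traces of length
exactly `k`, and the invariant is checked at positions `0 ≤ i < k`.
The empty (partial) trace assignment is modelled by the total map `fun _ => []`. -/
def SatK (m₀ : X → Val) (k : ℕ) :
    HForm Val X L V → (V → List (State Val X L)) → Prop
  | .all G O π ψ, Pi => ∀ σ ∈ TracesKO m₀ G O k, SatK m₀ k ψ (Function.update Pi π σ)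
  | .ex G O π ψ, Pi => ∃ σ ∈ TracesKO m₀ G O k, SatK m₀ k ψ (Function.update Pi π σ)
  | .always φ, Pi => ∀ i < k, φ (memAt m₀ Pi i)

/-- `⊨^k ψ` : satisfaction of `ψ` under the bounded semantics, starting from the empty
trace assignment. -/
def ModelsK (m₀ : X → Val) (k : ℕ) (ψ : HForm Val X L V) : Prop :=
  SatK m₀ k ψ fun _ => []

/-- Upper-bounded semantics `⊨^{≤ n} ψ`. -/
def ModelsUpTo (m₀ : X → Val) (n : ℕ) (ψ : HForm Val X L V) : Prop :=
  ∀ k ≤ n, ModelsK m₀ k ψ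

/-- Infinite-trace semantics `Pi ⊨^ω ψ`. -/
def SatOmega (m₀ : X → Val) :
    HForm Val X L V → (V → (ℕ → State Val X L)) → Prop
  | .all G O π ψ, Pi => ∀ σ ∈ TracesOmegaO m₀ G O, SatOmega m₀ ψ (Function.update Pi π σ)
  | .ex G O π ψ, Pi => ∃ σ ∈ TracesOmegaO m₀ G O, SatOmega m₀ ψ (Function.update Pi π σ)
  | .always φ, Pi => ∀ i : ℕ, φ fun π x => (Pi π i).2 x

/-- `⊨^ω ψ` : satisfaction of `ψ` under the infinite-trace semantics, starting from the
empty trace assignment (modelled by the default environment). -/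
def ModelsOmega [Inhabited L] (m₀ : X → Val) (ψ : HForm Val X L V) : Prop :=
  SatOmega m₀ ψ fun _ _ => (default, m₀)

/-- `G` is infinitely observable w.r.t. `O`: every observed trace with `k` observations is
a (length-`k`) prefix of some infinite observed trace. -/
def ProgramGraph.InfObs (m₀ : X → Val) (G : ProgramGraph Val X L) (O : Set L) : Prop :=
  ∀ k : ℕ, ∀ t ∈ TracesKO m₀ G O k, ∃ t' ∈ TracesOmegaO m₀ G O,
    t = List.ofFn fun i : Fin k => t' i

/-- The list of quantified program graphs (with their observed locations) of a formula. -/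
def HForm.graphs : HForm Val X L V → List (ProgramGraph Val X L × Set L)
  | .all G O _ ψ => (G, O) :: ψ.graphs
  | .ex G O _ ψ => (G, O) :: ψ.graphs
  | .always _ => []

/-- A formula is infinitely observable if all its quantified program graphs are. -/
def HForm.InfObs (m₀ : X → Val) (ψ : HForm Val X L V) : Prop :=
  ∀ p ∈ ψ.graphs, ProgramGraph.InfObs m₀ p.1 p.2

/-- `G` is `(k,O)`-observable: there is a bound `b` such that every finite trace with
exactly `k` observations has a prefix of length `< b` with the same `k` observations. -/
def ProgramGraph.Observable (m₀ : X → Val) (G : ProgramGraph Val X L) (O : Set L)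
    (k : ℕ) : Prop :=
  ∃ b : ℕ, ∀ τ ∈ FinTraces m₀ G, obsLen O τ = k →
    ∃ τ', τ' <+: τ ∧ obsLen O τ' = k ∧ τ'.length < b

/-! ### Symbolic execution

Symbolic variables are drawn from the countably infinite set `V* = ℕ` (one disjoint bank
of symbolic variables per trace variable is used when evaluating symbolic encodings of
formulas). Symbolic terms and path formulas are represented shallowly as functions of
assignments `ρ : ℕ → Val`. Fresh variables are chosen by a fixed deterministic scheme:
the symbolic state carries a counter of the used variables. -/

/-- A symbolic state: a location, a path formula, a symbolic memory and the counter of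
the fresh-variable scheme. -/
structure SymState (Val X L : Type) where
  loc : L
  path : (ℕ → Val) → Prop
  smem : X → (ℕ → Val) → Val
  ctr : ℕ

/-- Symbolic execution of an instruction on (symbolic memory, fresh counter) pairs. -/
def Instr.symExec : Instr Val X →
    ((X → (ℕ → Val) → Val) × ℕ) → ((X → (ℕ → Val) → Val) × ℕ) → Prop
  | .assign x e, p, p' =>
      p'.2 = p.2 ∧ p'.1 = Function.update p.1 x fun ρ => e fun y => p.1 y ρ
  | .havoc x, p, p' =>
      p'.2 = p.2 + 1 ∧ p'.1 = Function.update p.1 x fun ρ => ρ p.2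

/-- The symbolic transition relation: follow an edge, conjoin the (substituted) guard to
the path formula, require satisfiability, and symbolically execute the effect. -/
def ProgramGraph.SymStep (G : ProgramGraph Val X L) (s₁ s₂ : SymState Val X L) : Prop :=
  G.edges s₁.loc s₂.loc ∧
  s₂.path = (fun ρ => s₁.path ρ ∧ G.guard s₁.loc s₂.loc fun x => s₁.smem x ρ) ∧
  (∃ ρ, s₂.path ρ) ∧
  (G.effect s₁.loc s₂.loc).symExec (s₁.smem, s₁.ctr) (s₂.smem, s₂.ctr)

/-- The initial symbolic state `⟨ℓ₀, true, m̂₀⟩` (with `m̂₀` evaluating to `m₀`). -/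
def initSym (m₀ : X → Val) (G : ProgramGraph Val X L) : SymState Val X L :=
  ⟨G.init, fun _ => True, fun x _ => m₀ x, 0⟩

/-- `SymTraces*(G)`. -/
def SymTraces (m₀ : X → Val) (G : ProgramGraph Val X L) : Set (List (SymState Val X L)) :=
  { τ | τ.head? = some (initSym m₀ G) ∧ τ.Chain' G.SymStep }

/-- Projection of a symbolic trace onto observed locations. -/
noncomputable def obsSym (O : Set L) (τ : List (SymState Val X L)) :
    List (SymState Val X L) :=
  τ.filter fun s => decide (s.loc ∈ O)

/-- `SymTraces*_O(G)`. -/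
def SymTracesO (m₀ : X → Val) (G : ProgramGraph Val X L) (O : Set L) :
    Set (List (SymState Val X L)) :=
  { t | ∃ τ ∈ SymTraces m₀ G, t = obsSym O τ }

/-- `SymTraces^k_O(G)`. -/
def SymTracesKO (m₀ : X → Val) (G : ProgramGraph Val X L) (O : Set L) (k : ℕ) :
    Set (List (SymState Val X L)) :=
  { t | t ∈ SymTracesO m₀ G O ∧ t.length = k }

/-- `path(τ̂)`: the accumulated path formula of a symbolic trace (the path formula of its
last state). -/
def pathOf (τ : List (SymState Val X L)) : (ℕ → Val) → Prop :=
  match τ.getLast? with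
  | some s => s.path
  | none => fun _ => True

/-- The fresh-variable counter of (the last state of) a symbolic trace; the free symbolic
variables of the trace are exactly the variables below this counter. -/
def ctrOf (τ : List (SymState Val X L)) : ℕ :=
  match τ.getLast? with
  | some s => s.ctr
  | none => 0

/-- Concretization `γ_ρ(τ̂)` of a symbolic trace under an assignment `ρ` of the symbolic
variables. -/
def conc (ρ : ℕ → Val) (τ : List (SymState Val X L)) : List (State Val X L) :=
  τ.map fun s => (s.loc, fun x => s.smem x ρ)

/-- Concretization `γ(T)` of a set of symbolic traces:
`γ(T) = ⋃_{τ̂ ∈ T} { γ_ρ(τ̂) | ρ ⊨ path(τ̂) }`. -/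
def concSet (T : Set (List (SymState Val X L))) : Set (List (State Val X L)) :=
  { τ | ∃ t ∈ T, ∃ ρ, pathOf t ρ ∧ τ = conc ρ t }

/-- `ψ` is `k`-encodable: `SymTraces^k_O(G)` is finite for every quantified program. -/
def HForm.EncodableAt (m₀ : X → Val) (k : ℕ) (ψ : HForm Val X L V) : Prop :=
  ∀ p ∈ ψ.graphs, (SymTracesKO m₀ p.1 p.2 k).Finite

/-- `ρ'` agrees with `ρ` except possibly on the symbolic variables of the bank of the
trace variable `π` below the counter `c` (i.e. except on `FV` of the trace bound to `π`). -/
def AgreesExc (π : V) (c : ℕ) (ρ ρ' : V → ℕ → Val) : Prop :=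
  ∀ π' n, (π' ≠ π ∨ c ≤ n) → ρ' π' n = ρ π' n

/-- The symbolic valuation `Pî_i` (with default value `m₀ x` for unbound trace variables). -/
def smemAt (m₀ : X → Val) (Pih : V → List (SymState Val X L)) (ρ : V → ℕ → Val) (i : ℕ) :
    V → X → Val :=
  fun π x =>
    match (Pih π)[i]? with
    | some s => s.smem x (ρ π)
    | none => m₀ x

/-- The symbolic encoding `⟦ψ⟧^k_Pî` of the bounded semantics, as a (shallow) first-order
formula over the symbolic variables (one bank `ρ π : ℕ → Val` per trace variable `π`):
universal quantification becomes a conjunction over all symbolic traces (universally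
quantifying their free variables, guarded by the path condition), existential
quantification becomes a disjunction (existentially quantifying the free variables,
conjoined with the path condition), and `□φ` becomes the conjunction of the instances of
`φ` at positions `0 ≤ i < k`. -/
def Enc (m₀ : X → Val) (k : ℕ) :
    HForm Val X L V → (V → List (SymState Val X L)) → (V → ℕ → Val) → Prop
  | .all G O π ψ, Pih, ρ =>
      ∀ t ∈ SymTracesKO m₀ G O k, ∀ ρ', AgreesExc π (ctrOf t) ρ ρ' →
        pathOf t (ρ' π) → Enc m₀ k ψ (Function.update Pih π t) ρ'
  | .ex G O π ψ, Pih, ρ =>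
      ∃ t ∈ SymTracesKO m₀ G O k, ∃ ρ', AgreesExc π (ctrOf t) ρ ρ' ∧
        pathOf t (ρ' π) ∧ Enc m₀ k ψ (Function.update Pih π t) ρ'
  | .always φ, Pih, ρ => ∀ i < k, φ (smemAt m₀ Pih ρ i)

/-- `Pi ≃_ρ Pî`: the concrete trace assignment `Pi` is the concretization of the symbolic
trace assignment `Pî` under `ρ` (and `ρ` satisfies all corresponding path conditions). -/
def SimRho (ρ : V → ℕ → Val) (Pi : V → List (State Val X L))
    (Pih : V → List (SymState Val X L)) : Prop :=
  ∀ π, pathOf (Pih π) (ρ π) ∧ Pi π = conc (ρ π) (Pih π)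

end HyperSE

namespace HyperSE

section Aux

variable {Val X L : Type}

/-- Symbolic steps are deterministic once the target location is fixed. -/
lemma symStep_det (G : ProgramGraph Val X L) {s a b : SymState Val X L}
    (ha : G.SymStep s a) (hb : G.SymStep s b) (hl : a.loc = b.loc) : a = b := by
  obtain ⟨la, pa, ma, ca⟩ := a
  obtain ⟨lb, pb, mb, cb⟩ := b
  simp only at hl
  subst hl
  obtain ⟨_, hpa, _, hea⟩ := ha
  obtain ⟨_, hpb, _, heb⟩ := hb
  simp only [SymState.mk.injEq]
  simp only at hpa hpb hea heb
  refine ⟨trivial, hpa.trans hpb.symm, ?_, ?_⟩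
  · cases h : G.effect s.loc la <;> rw [h] at hea heb <;>
      simp only [Instr.symExec] at hea heb <;> rw [hea.2, heb.2]
  · cases h : G.effect s.loc la <;> rw [h] at hea heb <;>
      simp only [Instr.symExec] at hea heb <;> rw [hea.1, heb.1]

/-- Symbolic traces are determined by their sequences of locations. -/
lemma symTrace_det (G : ProgramGraph Val X L) :
    ∀ (τ₁ τ₂ : List (SymState Val X L)), τ₁.Chain' G.SymStep → τ₂.Chain' G.SymStep →
      τ₁.head? = τ₂.head? → τ₁.map SymState.loc = τ₂.map SymState.loc → τ₁ = τ₂ := by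
  intro τ₁
  induction τ₁ with
  | nil =>
    intro τ₂ _ _ _ hm
    cases τ₂ with
    | nil => rfl
    | cons s t => simp at hm
  | cons s₁ t₁ ih =>
    intro τ₂ hc₁ hc₂ hh hm
    cases τ₂ with
    | nil => simp at hm
    | cons s₂ t₂ =>
      simp only [List.head?_cons, Option.some.injEq] at hh
      subst hh
      congr 1
      cases t₁ with
      | nil =>
        cases t₂ with
        | nil => rfl
        | cons u₂ r₂ => simp at hm
      | cons u₁ r₁ =>
        cases t₂ with
        | nil => simp at hm
        | cons u₂ r₂ =>
          simp only [List.map_cons, List.cons.injEq] at hm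
          have hstep₁ := (List.isChain_cons_cons.mp hc₁).1
          have hstep₂ := (List.isChain_cons_cons.mp hc₂).1
          have hu : u₁ = u₂ :=
            symStep_det G hstep₁ hstep₂ hm.2.1
          exact ih (u₂ :: r₂) (List.isChain_cons_cons.mp hc₁).2 (List.isChain_cons_cons.mp hc₂).2
            (by simp [hu]) (by simp only [List.map_cons, hu, hm.2.2])

/-- Concretization of a symbolic trace whose final path condition holds. -/
lemma conc_trace (G : ProgramGraph Val X L) {ρ : ℕ → Val} :
    ∀ τ : List (SymState Val X L), τ.Chain' G.SymStep → pathOf τ ρ →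
      (∀ s ∈ τ, s.path ρ) ∧ (conc ρ τ).Chain' G.Step := by
  intro τ
  induction τ with
  | nil => intro _ _; exact ⟨by simp, List.IsChain.nil⟩
  | cons s₁ t ih =>
    cases t with
    | nil =>
      intro _ hp
      have hp1 : s₁.path ρ := by simpa [pathOf] using hp
      exact ⟨by simpa using hp1, List.IsChain.singleton _⟩
    | cons s₂ r =>
      intro hc hp
      have hp' : pathOf (s₂ :: r) ρ := by
        simpa only [pathOf, List.getLast?_cons_cons] using hp
      obtain ⟨hall, hchain⟩ := ih (List.isChain_cons_cons.mp hc).2 hp'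
      have h2 : s₂.path ρ := hall s₂ (by simp)
      obtain ⟨hedge, hpath, _, hexec⟩ := (List.isChain_cons_cons.mp hc).1
      rw [hpath] at h2
      refine ⟨?_, ?_⟩
      · intro s hs
        rcases List.mem_cons.mp hs with rfl | hs
        · exact h2.1
        · exact hall s hs
      · simp only [conc, List.map_cons] at hchain ⊢
        refine List.isChain_cons_cons.mpr ⟨⟨hedge, h2.2, ?_⟩, hchain⟩
        cases he : G.effect s₁.loc s₂.loc with
        | assign x e =>
          rw [he] at hexec
          simp only [Instr.symExec] at hexec
          simp only [Instr.exec]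
          rw [hexec.2]
          funext y
          by_cases hy : y = x <;> simp [Function.update_apply, hy]
        | havoc x =>
          rw [he] at hexec
          simp only [Instr.symExec] at hexec
          refine ⟨ρ s₁.ctr, ?_⟩
          rw [hexec.2]
          funext y
          by_cases hy : y = x <;> simp [Function.update_apply, hy]

/-- A symbolic trace of length at least 2 has a satisfiable path condition. -/
lemma path_sat (G : ProgramGraph Val X L) :
    ∀ τ : List (SymState Val X L), τ.Chain' G.SymStep → 2 ≤ τ.length →
      ∃ ρ, pathOf τ ρ := by
  intro τ
  induction τ with
  | nil => intro _ hl; simp at hl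
  | cons s₁ t ih =>
    cases t with
    | nil => intro _ hl; simp at hl
    | cons s₂ r =>
      intro hc _
      cases r with
      | nil =>
        obtain ⟨_, _, ⟨ρ, hρ⟩, _⟩ := (List.isChain_cons_cons.mp hc).1
        exact ⟨ρ, by simpa [pathOf] using hρ⟩
      | cons s₃ r' =>
        obtain ⟨ρ, hρ⟩ := ih (List.isChain_cons_cons.mp hc).2 (by simp)
        exact ⟨ρ, by simpa only [pathOf, List.getLast?_cons_cons] using hρ⟩

end Aux

/-- If the program graph `G` (with finitely many locations) is
`(k,O)`-observable, then the set `SymTraces^k_O(G)` of observed symbolic traces with `k`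
observations is finite (with the fixed deterministic choice of fresh variables used by
the symbolic execution). -/
theorem symTracesKO_finite_of_observable {Val X L : Type} [Fintype L]
    (m₀ : X → Val) (G : ProgramGraph Val X L) (O : Set L) (k : ℕ)
    (h : ProgramGraph.Observable m₀ G O k) :
    (SymTracesKO m₀ G O k).Finite := by
  obtain ⟨b, hb⟩ := h
  set B := max b 1 with hB
  set S : Set (List (SymState Val X L)) :=
    {τ | τ ∈ SymTraces m₀ G ∧ τ.length ≤ B} with hS
  have hSfin : S.Finite := by
    apply Set.Finite.of_finite_image (f := List.map SymState.loc)
    · refine (List.finite_length_le L B).subset ?_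
      rintro _ ⟨τ, ⟨_, hlen⟩, rfl⟩
      simpa using hlen
    · intro τ₁ h₁ τ₂ h₂ heq
      exact symTrace_det G τ₁ τ₂ h₁.1.2 h₂.1.2 (h₁.1.1.trans h₂.1.1.symm) heq
  refine ((hSfin.image (obsSym O)).insert []).subset ?_
  rintro t ⟨⟨τ, hτ, rfl⟩, hlen⟩
  obtain ⟨hhead, hchain⟩ := hτ
  cases τ with
  | nil => simp at hhead
  | cons s₀ rest =>
  simp only [List.head?_cons, Option.some.injEq] at hhead
  by_cases h2 : 2 ≤ (s₀ :: rest).length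
  · obtain ⟨ρ, hρ⟩ := path_sat G _ hchain h2
    obtain ⟨hall, hchainC⟩ := conc_trace G _ hchain hρ
    have hconc : conc ρ (s₀ :: rest) ∈ FinTraces m₀ G := by
      refine ⟨?_, hchainC⟩
      simp only [conc, List.map_cons, List.head?_cons, Option.some.injEq, hhead]
      rfl
    have hkey : ∀ l : List (SymState Val X L),
        obsLen O (conc ρ l) = (obsSym O l).length := by
      intro l
      unfold obsLen obs conc obsSym
      rw [List.filter_map]
      rw [List.length_map]
      rfl
    have hobslen : obsLen O (conc ρ (s₀ :: rest)) = k := by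
      rw [hkey]; exact hlen
    obtain ⟨τ', hpre, hτ'k, hτ'b⟩ := hb _ hconc hobslen
    have hτ'take : τ' = (conc ρ (s₀ :: rest)).take τ'.length :=
      List.prefix_iff_eq_take.mp hpre
    by_cases hn : τ'.length = 0
    · refine Set.mem_insert_iff.mpr (Or.inl ?_)
      have hk0 : k = 0 := by
        have h0 : τ' = [] := List.length_eq_zero_iff.mp hn
        rw [h0] at hτ'k
        simpa [obsLen, obs] using hτ'k.symm
      exact List.length_eq_zero_iff.mp (hlen.trans hk0)
    · refine Set.mem_insert_iff.mpr (Or.inr ?_)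
      have htake_mem : (s₀ :: rest).take τ'.length ∈ SymTraces m₀ G := by
        refine ⟨?_, hchain.prefix (List.take_prefix τ'.length _)⟩
        obtain ⟨m, hm⟩ := Nat.exists_eq_succ_of_ne_zero hn
        rw [hm]
        simp [hhead]
      have htake_len : ((s₀ :: rest).take τ'.length).length ≤ B := by
        have := List.length_take_le τ'.length (s₀ :: rest)
        omega
      have hc2 : conc ρ ((s₀ :: rest).take τ'.length) = τ' := by
        simp only [conc]
        rw [List.map_take]
        have h3 := hτ'take
        simp only [conc] at h3
        exact h3.symm
      have h1 : obsLen O (conc ρ ((s₀ :: rest).take τ'.length)) = k := by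
        rw [hc2]; exact hτ'k
      rw [hkey] at h1
      have hpref : obsSym O ((s₀ :: rest).take τ'.length) <+: obsSym O (s₀ :: rest) :=
        (List.take_prefix τ'.length _).filter _
      have heq : obsSym O ((s₀ :: rest).take τ'.length) = obsSym O (s₀ :: rest) :=
        hpref.eq_of_length (h1.trans hlen.symm)
      exact ⟨(s₀ :: rest).take τ'.length, ⟨htake_mem, htake_len⟩, heq⟩
  · refine Set.mem_insert_iff.mpr (Or.inr ?_)
    have : rest = [] := by
      cases rest with
      | nil => rfl
      | cons a l => simp at h2
    subst this
    exact ⟨[s₀], ⟨⟨by simp [hhead], hchain⟩, by simp [hB]⟩, rfl⟩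

end HyperSE
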